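/- Let n be a positive integer and θ ∈ (0, 1/2). Let D be a probability mass function on {0,1}^n with full support (D(σ) > 0 for all σ), and let D' be a probability mass function on {0,1}^n such that for every ℓ ∈ {1, …, n}, every prefix ρ ∈ {0,1}^{ℓ−1}, and every c ∈ {0,1}: D'^ℓ_ρ(c) = (1 − 2θ)·D^ℓ_ρ(c) + θ. Then d_TV(D, D') ≤ θ·n. -/

import Mathlib

open Finset

/-- The probability mass `D(S_{σ_{<j}})` of the set of strings agreeing with `σ`
on the first `j` coordinates. -/
noncomputable def prefMass {n : ℕ} {A : Type*} [Fintype A] [DecidableEq A]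
    (D : (Fin n → A) → ℝ) (σ : Fin n → A) (j : ℕ) : ℝ :=
  ∑ w : Fin n → A, if ∀ i : Fin n, (i : ℕ) < j → w i = σ i then D w else 0

/-- The conditional marginal `D^{j+1}_{σ_{<j+1}}(σ[j+1])` (0-indexed `j`): the
probability that the `(j+1)`-st symbol equals `σ[j+1]` conditioned on the first
`j` symbols matching `σ`.  Quantifying over all `σ` and all `j` captures all
pairs of a prefix `ρ ∈ Σ^{ℓ-1}` and a symbol `c`. -/
noncomputable def condMarg {n : ℕ} {A : Type*} [Fintype A] [DecidableEq A]
    (D : (Fin n → A) → ℝ) (σ : Fin n → A) (j : Fin n) : ℝ :=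
  prefMass D σ (j + 1) / prefMass D σ j

section aux
variable {n : ℕ}

lemma prefMass_zero (D : (Fin n → Bool) → ℝ) (σ : Fin n → Bool) :
    prefMass D σ 0 = ∑ w, D w := by
  simp [prefMass]

lemma prefMass_n (D : (Fin n → Bool) → ℝ) (σ : Fin n → Bool) :
    prefMass D σ n = D σ := by
  unfold prefMass
  rw [Finset.sum_eq_single σ]
  · simp
  · intro w _ hw
    rw [if_neg]
    intro h
    exact hw (funext fun i => h i i.isLt)
  · intro h; exact absurd (Finset.mem_univ σ) h

lemma prefMass_nonneg (D : (Fin n → Bool) → ℝ) (hD : ∀ w, 0 ≤ D w)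
    (σ : Fin n → Bool) (j : ℕ) : 0 ≤ prefMass D σ j :=
  Finset.sum_nonneg fun w _ => by
    by_cases h : ∀ i : Fin n, (i : ℕ) < j → w i = σ i
    · rw [if_pos h]; exact hD w
    · rw [if_neg h]

lemma prefMass_pos (D : (Fin n → Bool) → ℝ) (hD : ∀ w, 0 < D w)
    (σ : Fin n → Bool) (j : ℕ) : 0 < prefMass D σ j := by
  have h1 : D σ ≤ prefMass D σ j := by
    have := Finset.single_le_sum
      (f := fun w => if ∀ i : Fin n, (i : ℕ) < j → w i = σ i then D w else 0)
      (fun w _ => by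
        by_cases h : ∀ i : Fin n, (i : ℕ) < j → w i = σ i
        · rw [if_pos h]; exact (hD w).le
        · rw [if_neg h])
      (Finset.mem_univ σ)
    simpa [prefMass] using this
  exact lt_of_lt_of_le (hD σ) h1

lemma prefMass_succ_le (D : (Fin n → Bool) → ℝ) (hD : ∀ w, 0 ≤ D w)
    (σ : Fin n → Bool) (j : ℕ) : prefMass D σ (j + 1) ≤ prefMass D σ j := by
  apply Finset.sum_le_sum
  intro w _
  by_cases h : ∀ i : Fin n, (i : ℕ) < j + 1 → w i = σ i
  · rw [if_pos h, if_pos fun i hi => h i (Nat.lt_succ_of_lt hi)]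
  · rw [if_neg h]
    by_cases h' : ∀ i : Fin n, (i : ℕ) < j → w i = σ i
    · rw [if_pos h']; exact hD w
    · rw [if_neg h']

lemma prefMass_congr (D : (Fin n → Bool) → ℝ) {σ τ : Fin n → Bool} (j : ℕ)
    (h : ∀ i : Fin n, (i : ℕ) < j → σ i = τ i) :
    prefMass D σ j = prefMass D τ j := by
  unfold prefMass
  apply Finset.sum_congr rfl
  intro w _
  apply if_congr _ rfl rfl
  constructor
  · intro hw i hi; rw [hw i hi]; exact h i hi
  · intro hw i hi; rw [hw i hi]; exact (h i hi).symm

def flipAt (J : Fin n) (σ : Fin n → Bool) : Fin n → Bool :=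
  fun i => if i = J then !σ J else σ i

lemma flipAt_same (J : Fin n) (σ : Fin n → Bool) : flipAt J σ J = !σ J := by
  simp [flipAt]

lemma flipAt_ne (J : Fin n) (σ : Fin n → Bool) {i : Fin n} (h : i ≠ J) :
    flipAt J σ i = σ i := by
  simp [flipAt, h]

lemma flipAt_invol (J : Fin n) : Function.Involutive (flipAt J) := by
  intro σ; funext i
  by_cases h : i = J
  · subst h; simp [flipAt]
  · simp [flipAt, h]

lemma prefMass_split (D : (Fin n → Bool) → ℝ) (J : Fin n) (σ : Fin n → Bool) :
    prefMass D σ ((J : ℕ) + 1) + prefMass D (flipAt J σ) ((J : ℕ) + 1)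
      = prefMass D σ (J : ℕ) := by
  unfold prefMass
  rw [← Finset.sum_add_distrib]
  apply Finset.sum_congr rfl
  intro w _
  have h1 : (∀ i : Fin n, (i : ℕ) < (J : ℕ) + 1 → w i = σ i) ↔
      ((∀ i : Fin n, (i : ℕ) < (J : ℕ) → w i = σ i) ∧ w J = σ J) := by
    constructor
    · intro h
      exact ⟨fun i hi => h i (Nat.lt_succ_of_lt hi), h J (Nat.lt_succ_self _)⟩
    · rintro ⟨h, hJ⟩ i hi
      rcases Nat.lt_succ_iff_lt_or_eq.1 hi with h' | h'
      · exact h i h'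
      · rw [Fin.ext h']; exact hJ
  have h2 : (∀ i : Fin n, (i : ℕ) < (J : ℕ) + 1 → w i = flipAt J σ i) ↔
      ((∀ i : Fin n, (i : ℕ) < (J : ℕ) → w i = σ i) ∧ w J = !σ J) := by
    constructor
    · intro h
      refine ⟨fun i hi => ?_, (h J (Nat.lt_succ_self _)).trans (flipAt_same J σ)⟩
      have hne : i ≠ J := by
        intro he; rw [he] at hi; exact absurd hi (lt_irrefl _)
      exact (h i (Nat.lt_succ_of_lt hi)).trans (flipAt_ne J σ hne)
    · rintro ⟨h, hJ⟩ i hi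
      rcases Nat.lt_succ_iff_lt_or_eq.1 hi with h' | h'
      · have hne : i ≠ J := by
          intro he; rw [he] at h'; exact absurd h' (lt_irrefl _)
        rw [flipAt_ne J σ hne]; exact h i h'
      · rw [Fin.ext h', flipAt_same]; exact hJ
  rw [if_congr h1 rfl rfl, if_congr h2 rfl rfl]
  by_cases hP : ∀ i : Fin n, (i : ℕ) < (J : ℕ) → w i = σ i
  · by_cases hw : w J = σ J
    · have hw' : ¬(w J = !σ J) := by simp [hw]
      rw [if_pos ⟨hP, hw⟩, if_neg (fun hc => hw' hc.2), if_pos hP, add_zero]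
    · have hw' : w J = !σ J := by
        cases hb : σ J <;> cases hc : w J <;> simp_all
      rw [if_neg (fun hc => hw hc.2), if_pos ⟨hP, hw'⟩, if_pos hP, zero_add]
  · rw [if_neg (fun hc => hP hc.1), if_neg (fun hc => hP hc.1), if_neg hP, add_zero]

end aux

/-- If `D` is a fully supported pmf on `{0,1}ⁿ`, `θ ∈ (0,1/2)`,
and `D'` is a pmf whose conditional marginals satisfy
`D'^ℓ_ρ(c) = (1-2θ)·D^ℓ_ρ(c) + θ` for every prefix `ρ` and bit `c`,
then `d_TV(D, D') ≤ θ·n`. -/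
theorem tv_tamed_le_bool {n : ℕ} (hn : 0 < n) (θ : ℝ) (hθ : θ ∈ Set.Ioo (0 : ℝ) (1/2))
    (D D' : (Fin n → Bool) → ℝ)
    (hD0 : ∀ σ, 0 < D σ) (hD1 : ∑ σ, D σ = 1)
    (hD'0 : ∀ σ, 0 ≤ D' σ) (hD'1 : ∑ σ, D' σ = 1)
    (htame : ∀ (σ : Fin n → Bool) (j : Fin n),
      condMarg D' σ j = (1 - 2 * θ) * condMarg D σ j + θ) :
    (1 / 2) * ∑ σ, |D σ - D' σ| ≤ θ * n := by
  obtain ⟨hθ0, hθ2⟩ := hθ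
  have key : ∀ j : ℕ, j ≤ n →
      (∀ σ, 0 < prefMass D' σ j) ∧
      (∑ σ, prefMass D' σ j = 2 ^ n / 2 ^ j) ∧
      (∑ σ : Fin n → Bool, |prefMass D σ j - prefMass D' σ j|
        ≤ 2 * θ * j * (2 ^ n / 2 ^ j)) := by
    intro j
    induction j with
    | zero =>
      intro _
      refine ⟨fun σ => ?_, ?_, ?_⟩
      · rw [prefMass_zero, hD'1]; norm_num
      · have : ∀ σ : Fin n → Bool, prefMass D' σ 0 = 1 := fun σ => by
          rw [prefMass_zero, hD'1]
        rw [Finset.sum_congr rfl fun σ _ => this σ]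
        simp [Finset.card_univ]
      · have hz : ∀ σ : Fin n → Bool,
            |prefMass D σ 0 - prefMass D' σ 0| = 0 := fun σ => by
          rw [prefMass_zero, prefMass_zero, hD1, hD'1]; simp
        rw [Finset.sum_congr rfl fun σ _ => hz σ]
        simp
    | succ j ih =>
      intro hj1
      have hjn : j < n := hj1
      obtain ⟨ihpos, ihmass, ihtv⟩ := ih (le_of_lt hjn)
      set J : Fin n := ⟨j, hjn⟩ with hJdef
      have hJ : (J : ℕ) = j := rfl
      have hApos : ∀ (σ : Fin n → Bool) (k : ℕ), 0 < prefMass D σ k :=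
        fun σ k => prefMass_pos D hD0 σ k
      have hBnn : ∀ (σ : Fin n → Bool) (k : ℕ), 0 ≤ prefMass D' σ k :=
        fun σ k => prefMass_nonneg D' hD'0 σ k
      -- conditional marginal facts
      have hp_nonneg : ∀ σ, 0 ≤ condMarg D σ J := fun σ =>
        div_nonneg (prefMass_nonneg D (fun w => (hD0 w).le) σ _) (hApos σ _).le
      have hp_le_one : ∀ σ, condMarg D σ J ≤ 1 := fun σ =>
        (div_le_one (hApos σ _)).2 (prefMass_succ_le D (fun w => (hD0 w).le) σ _)
      -- recursions
      have hArec : ∀ σ, prefMass D σ (j + 1) = condMarg D σ J * prefMass D σ j :=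
        fun σ => (div_mul_cancel₀ _ (hApos σ j).ne').symm
      have hBrec : ∀ σ, prefMass D' σ (j + 1) = condMarg D' σ J * prefMass D' σ j :=
        fun σ => (div_mul_cancel₀ _ (ihpos σ).ne').symm
      have hq_pos : ∀ σ, 0 < condMarg D' σ J := fun σ => by
        rw [htame σ J]
        have := hp_nonneg σ
        nlinarith
      -- flips
      have hflip_agree : ∀ σ : Fin n → Bool, ∀ i : Fin n, (i : ℕ) < j →
          flipAt J σ i = σ i := by
        intro σ i hi
        exact flipAt_ne J σ (fun he => by rw [he] at hi; exact absurd hi (lt_irrefl _))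
      have hsum_flip : ∀ f : (Fin n → Bool) → ℝ,
          ∑ σ, f (flipAt J σ) = ∑ σ, f σ := by
        intro f
        have := Equiv.sum_comp ((flipAt_invol J).toPerm (flipAt J)) f
        simpa [Function.Involutive.coe_toPerm] using this
      have hpflip : ∀ σ, condMarg D σ J + condMarg D (flipAt J σ) J = 1 := by
        intro σ
        unfold condMarg
        rw [show prefMass D (flipAt J σ) (J : ℕ) = prefMass D σ (J : ℕ) from
          prefMass_congr D _ (hflip_agree σ), ← add_div, prefMass_split D J σ,
          div_self (hApos σ _).ne']
      refine ⟨?_, ?_, ?_⟩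
      · -- positivity
        intro σ
        rw [hBrec σ]
        exact mul_pos (hq_pos σ) (ihpos σ)
      · -- total mass
        have keyA : ∑ σ, (prefMass D' σ (j + 1) + prefMass D' (flipAt J σ) (j + 1))
            = ∑ σ, prefMass D' σ j :=
          Finset.sum_congr rfl fun σ _ => prefMass_split D' J σ
        rw [Finset.sum_add_distrib,
          hsum_flip (fun σ => prefMass D' σ (j + 1)), ihmass] at keyA
        have h2 : (2 : ℝ) ^ (j + 1) = 2 ^ j * 2 := by ring
        rw [h2]
        have hpow : (0 : ℝ) < 2 ^ j := by positivity
        field_simp at keyA ⊢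
        linarith
      · -- tv bound
        set g : (Fin n → Bool) → ℝ :=
          fun σ => |prefMass D σ j - prefMass D' σ j| with hgdef
        have hgflip : ∀ σ, g (flipAt J σ) = g σ := by
          intro σ
          simp only [hgdef]
          rw [prefMass_congr D j (hflip_agree σ), prefMass_congr D' j (hflip_agree σ)]
        have hpt : ∀ σ, |prefMass D σ (j + 1) - prefMass D' σ (j + 1)|
            ≤ condMarg D σ J * g σ + θ * prefMass D' σ j := by
          intro σ
          rw [hArec σ, hBrec σ, htame σ J]
          set p := condMarg D σ J
          set a := prefMass D σ j
          set b := prefMass D' σ j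
          have h1 : p * a - ((1 - 2 * θ) * p + θ) * b
              = p * (a - b) + (p - ((1 - 2 * θ) * p + θ)) * b := by ring
          rw [h1]
          have h2 : |p * (a - b) + (p - ((1 - 2 * θ) * p + θ)) * b|
              ≤ |p * (a - b)| + |(p - ((1 - 2 * θ) * p + θ)) * b| := abs_add_le _ _
          have h3 : |p * (a - b)| = p * g σ := by
            rw [abs_mul, abs_of_nonneg (hp_nonneg σ)]
          have h4 : |(p - ((1 - 2 * θ) * p + θ)) * b| ≤ θ * b := by
            rw [abs_mul, abs_of_nonneg (hBnn σ j)]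
            apply mul_le_mul_of_nonneg_right _ (hBnn σ j)
            rw [abs_le]
            constructor
            · have := hp_nonneg σ; nlinarith
            · have := hp_le_one σ; nlinarith
          calc _ ≤ |p * (a - b)| + |(p - ((1 - 2 * θ) * p + θ)) * b| := h2
            _ ≤ p * g σ + θ * b := by rw [h3]; linarith
        have hhalf : ∑ σ, condMarg D σ J * g σ = (∑ σ, g σ) / 2 := by
          have key2 : ∑ σ, (condMarg D σ J * g σ + condMarg D (flipAt J σ) J * g (flipAt J σ))
              = ∑ σ, g σ :=
            Finset.sum_congr rfl fun σ _ => by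
              rw [hgflip σ, ← add_mul, hpflip σ, one_mul]
          rw [Finset.sum_add_distrib,
            hsum_flip (fun σ => condMarg D σ J * g σ)] at key2
          linarith
        calc ∑ σ : Fin n → Bool, |prefMass D σ (j + 1) - prefMass D' σ (j + 1)|
            ≤ ∑ σ, (condMarg D σ J * g σ + θ * prefMass D' σ j) :=
              Finset.sum_le_sum fun σ _ => hpt σ
          _ = (∑ σ, g σ) / 2 + θ * (2 ^ n / 2 ^ j) := by
              rw [Finset.sum_add_distrib, hhalf, ← Finset.mul_sum, ihmass]
          _ ≤ (2 * θ * j * (2 ^ n / 2 ^ j)) / 2 + θ * (2 ^ n / 2 ^ j) := by linarith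
          _ = 2 * θ * (j + 1 : ℕ) * (2 ^ n / 2 ^ (j + 1)) := by
              have h2 : (2 : ℝ) ^ (j + 1) = 2 ^ j * 2 := by ring
              have hpow : (0 : ℝ) < 2 ^ j := by positivity
              rw [h2]
              push_cast
              field_simp
  obtain ⟨_, _, htv⟩ := key n le_rfl
  have hrw : ∀ σ : Fin n → Bool, |prefMass D σ n - prefMass D' σ n| = |D σ - D' σ| :=
    fun σ => by rw [prefMass_n, prefMass_n]
  rw [Finset.sum_congr rfl fun σ _ => hrw σ] at htv
  have hpow : (0 : ℝ) < 2 ^ n := by positivity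
  have : (2 : ℝ) ^ n / 2 ^ n = 1 := div_self hpow.ne'
  rw [this, mul_one] at htv
  linarith
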